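/- arXiv:2011.01055 — 4 statements merged into one kernel-verified Lean document; each statement's English description precedes it below -/
import Mathlib

section
/- Let d, d0, K ≥ 1 and let N be a PSD matrix on I0⊗I_1⊗…⊗I_K⊗O_1⊗…⊗O_K⊗O0 (dim I_k = dim O_k = d for k ≥ 1, dim I0 = dim O0 = d0) with Tr N ≤ d^K·d0. If Tr_{I O}(P_sym N P_sym) = c · J_id for some c ≥ 0, then for every d×d unitary U there exists c_U ≥ 0 such that Tr_{I O}[N·((J_U^{⊗K})^T ⊗ I_{I0 O0})] = c_U · J_id; that is, N neutralizes all unitary operations. -/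
/-!
Statement 3 (Lemma 1 of "Success-or-Draw"): if the slot-partial trace of
`P_sym N P_sym` is proportional to `J_id`, then `N` neutralizes every unitary:
`Tr_{I O}[N ((J_U^{⊗K})ᵀ ⊗ I_{I0 O0})] = c_U · J_id` for every unitary `U`.

Conventions: matrices on tensor products are indexed by products of `Fin` types;
the `K` slots are encoded as functions `Fin K → Fin d`; partial traces are
entrywise diagonal sums; `choi U (i,k) (j,l) = U k i * conj (U l j)`.
-/

open Matrix Finset
open scoped ComplexOrder

noncomputable section

/-- Choi matrix of (the unitary channel induced by) a square matrix `U`. -/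
def choi {n : ℕ} (U : Matrix (Fin n) (Fin n) ℂ) :
    Matrix (Fin n × Fin n) (Fin n × Fin n) ℂ :=
  fun p q => U p.2 p.1 * star (U q.2 q.1)

/-- Index type for `K`-slot combs: `I0 × (I1⊗…⊗I_K) × (O1⊗…⊗O_K) × O0`. -/
abbrev IxK (d0 d K : ℕ) := Fin d0 × (Fin K → Fin d) × (Fin K → Fin d) × Fin d0

/-- `Tr_{I O}[C ((J^{⊗K})ᵀ ⊗ I_{I0 O0})]`: action of a `K`-slot comb on `K` copies
of a Choi matrix (the `k`-th copy sitting on `I_k ⊗ O_k`). -/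
def actK {d0 d K : ℕ} (C : Matrix (IxK d0 d K) (IxK d0 d K) ℂ)
    (J : Matrix (Fin d × Fin d) (Fin d × Fin d) ℂ) :
    Matrix (Fin d0 × Fin d0) (Fin d0 × Fin d0) ℂ :=
  fun x y => ∑ a, ∑ b, ∑ a', ∑ b',
    C (x.1, a, b, x.2) (y.1, a', b', y.2) * ∏ k, J (a k, b k) (a' k, b' k)

/-- The symmetrizer `P_sym = (1/K!) ∑_σ P_σ^I ⊗ P_σ^O`, acting as the identity on
`I0` and `O0`. -/
def PsymF (d0 d K : ℕ) : Matrix (IxK d0 d K) (IxK d0 d K) ℂ :=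
  fun x y => (if x.1 = y.1 ∧ x.2.2.2 = y.2.2.2 then 1 else 0) *
    (((Nat.factorial K : ℂ))⁻¹ * ∑ σ : Equiv.Perm (Fin K),
      if x.2.1 = y.2.1 ∘ σ ∧ x.2.2.1 = y.2.2.1 ∘ σ then 1 else 0)

/-- Partial trace over all the slot systems `I ⊗ O`, giving a matrix on `I0 × O0`. -/
def ptrIO {d0 d K : ℕ} (M : Matrix (IxK d0 d K) (IxK d0 d K) ℂ) :
    Matrix (Fin d0 × Fin d0) (Fin d0 × Fin d0) ℂ :=
  fun x y => ∑ a, ∑ b, M (x.1, a, b, x.2) (y.1, a, b, y.2)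

/-! ### Auxiliary machinery -/

/-- The vector on `IxK` encoding `δ_{x1,i} δ_{x4,j} conj(∏_k U (b k) (a k))`. -/
def wvec (d0 d K : ℕ) (U : Matrix (Fin d) (Fin d) ℂ) (i j : Fin d0) :
    IxK d0 d K → ℂ :=
  fun x => (if x.1 = i ∧ x.2.2.2 = j then 1 else 0) *
    star (∏ k, U (x.2.2.1 k) (x.2.1 k))

lemma comp_iff {d K : ℕ} (u v : Fin K → Fin d) (σ : Equiv.Perm (Fin K)) :
    u = v ∘ ⇑σ ↔ v = u ∘ ⇑σ⁻¹ := by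
  constructor
  · rintro rfl; funext m; simp
  · rintro rfl; funext m; simp

lemma sumCollapseA {d0 d K : ℕ} (f : IxK d0 d K → ℂ) (i j : Fin d0)
    (g : (Fin K → Fin d) → (Fin K → Fin d) → ℂ) :
    ∑ x : IxK d0 d K, f x * ((if x.1 = i ∧ x.2.2.2 = j then 1 else 0) * g x.2.1 x.2.2.1)
      = ∑ a, ∑ b, f (i, a, b, j) * g a b := by
  simp only [Fintype.sum_prod_type]
  rw [Finset.sum_eq_single i]
  · refine Finset.sum_congr rfl fun a _ => ?_
    refine Finset.sum_congr rfl fun b _ => ?_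
    rw [Finset.sum_eq_single j]
    · simp
    · intro x4 _ hx4; simp [hx4]
    · simp
  · intro x1 _ hx1
    apply Finset.sum_eq_zero; intro a _
    apply Finset.sum_eq_zero; intro b _
    apply Finset.sum_eq_zero; intro x4 _
    simp [hx1]
  · simp

lemma sumCollapseB {d0 d K : ℕ} (i j : Fin d0) (F : IxK d0 d K → ℂ) :
    ∑ y : IxK d0 d K, (if i = y.1 ∧ j = y.2.2.2 then 1 else 0) * F y
      = ∑ a, ∑ b, F (i, a, b, j) := by
  simp only [Fintype.sum_prod_type]
  rw [Finset.sum_eq_single i]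
  · refine Finset.sum_congr rfl fun a _ => ?_
    refine Finset.sum_congr rfl fun b _ => ?_
    rw [Finset.sum_eq_single j]
    · simp
    · intro x4 _ hx4; simp [Ne.symm hx4]
    · simp
  · intro x1 _ hx1
    apply Finset.sum_eq_zero; intro a _
    apply Finset.sum_eq_zero; intro b _
    apply Finset.sum_eq_zero; intro x4 _
    simp [Ne.symm hx1]
  · simp

lemma sumPairA {d K : ℕ} (c1 c2 : Fin K → Fin d)
    (g : (Fin K → Fin d) → (Fin K → Fin d) → ℂ) :
    ∑ a' : Fin K → Fin d, ∑ b' : Fin K → Fin d,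
      (if a' = c1 ∧ b' = c2 then 1 else 0) * g a' b' = g c1 c2 := by
  rw [Finset.sum_eq_single c1]
  · rw [Finset.sum_eq_single c2]
    · simp
    · intro b' _ hb; simp [hb]
    · simp
  · intro a' _ ha
    apply Finset.sum_eq_zero; intro b' _
    simp [ha]
  · simp

lemma PsymF_herm (d0 d K : ℕ) : (PsymF d0 d K)ᴴ = PsymF d0 d K := by
  ext x y
  simp only [conjTranspose_apply, PsymF, star_mul', star_inv₀, star_natCast,
    apply_ite (star : ℂ → ℂ), star_one, star_zero, star_sum]
  congr 1
  · simp [eq_comm]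
  · congr 1
    refine Fintype.sum_equiv (Equiv.inv (Equiv.Perm (Fin K))) _ _ fun σ => ?_
    simp only [Equiv.inv_apply]
    congr 1
    rw [eq_iff_iff, comp_iff y.2.1 x.2.1 σ, comp_iff y.2.2.1 x.2.2.1 σ]

lemma PsymF_fix (d0 d K : ℕ) (U : Matrix (Fin d) (Fin d) ℂ) (i j : Fin d0) :
    PsymF d0 d K *ᵥ wvec d0 d K U i j = wvec d0 d K U i j := by
  funext x
  show ∑ y, PsymF d0 d K x y * wvec d0 d K U i j y = _
  simp only [PsymF, wvec]
  have h1 : ∀ y : IxK d0 d K,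
      ((if x.1 = y.1 ∧ x.2.2.2 = y.2.2.2 then (1:ℂ) else 0) *
        (((Nat.factorial K : ℂ))⁻¹ * ∑ σ : Equiv.Perm (Fin K),
          if x.2.1 = y.2.1 ∘ σ ∧ x.2.2.1 = y.2.2.1 ∘ σ then 1 else 0)) *
      ((if y.1 = i ∧ y.2.2.2 = j then (1:ℂ) else 0) *
        star (∏ k, U (y.2.2.1 k) (y.2.1 k)))
      = (if x.1 = y.1 ∧ x.2.2.2 = y.2.2.2 then (1:ℂ) else 0) *
        ((((Nat.factorial K : ℂ))⁻¹ * ∑ σ : Equiv.Perm (Fin K),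
          if x.2.1 = y.2.1 ∘ σ ∧ x.2.2.1 = y.2.2.1 ∘ σ then 1 else 0) *
        ((if y.1 = i ∧ y.2.2.2 = j then (1:ℂ) else 0) *
          star (∏ k, U (y.2.2.1 k) (y.2.1 k)))) := by
    intro y; ring
  calc
    ∑ y : IxK d0 d K, _ = ∑ y : IxK d0 d K,
        (if x.1 = y.1 ∧ x.2.2.2 = y.2.2.2 then (1:ℂ) else 0) *
        ((((Nat.factorial K : ℂ))⁻¹ * ∑ σ : Equiv.Perm (Fin K),
          if x.2.1 = y.2.1 ∘ σ ∧ x.2.2.1 = y.2.2.1 ∘ σ then 1 else 0) *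
        ((if y.1 = i ∧ y.2.2.2 = j then (1:ℂ) else 0) *
          star (∏ k, U (y.2.2.1 k) (y.2.1 k)))) := Finset.sum_congr rfl fun y _ => h1 y
    _ = ∑ a, ∑ b,
        ((((Nat.factorial K : ℂ))⁻¹ * ∑ σ : Equiv.Perm (Fin K),
          if x.2.1 = a ∘ σ ∧ x.2.2.1 = b ∘ σ then 1 else 0) *
        ((if x.1 = i ∧ x.2.2.2 = j then (1:ℂ) else 0) *
          star (∏ k, U (b k) (a k)))) := sumCollapseB x.1 x.2.2.2 _
    _ = (if x.1 = i ∧ x.2.2.2 = j then (1:ℂ) else 0) *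
          star (∏ k, U (x.2.2.1 k) (x.2.1 k)) := by
      have hstep : ∀ σ : Equiv.Perm (Fin K),
          (∑ a : Fin K → Fin d, ∑ b : Fin K → Fin d,
            (if x.2.1 = a ∘ σ ∧ x.2.2.1 = b ∘ σ then (1:ℂ) else 0) *
              star (∏ k, U (b k) (a k)))
          = star (∏ k, U (x.2.2.1 k) (x.2.1 k)) := by
        intro σ
        calc
          _ = ∑ a : Fin K → Fin d, ∑ b : Fin K → Fin d,
              (if a = x.2.1 ∘ ⇑σ⁻¹ ∧ b = x.2.2.1 ∘ ⇑σ⁻¹ then (1:ℂ) else 0) *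
                star (∏ k, U (b k) (a k)) := by
            refine Finset.sum_congr rfl fun a _ => Finset.sum_congr rfl fun b _ => ?_
            congr 1
            rw [if_congr (and_congr (comp_iff x.2.1 a σ) (comp_iff x.2.2.1 b σ)) rfl rfl]
          _ = star (∏ k, U ((x.2.2.1 ∘ ⇑σ⁻¹) k) ((x.2.1 ∘ ⇑σ⁻¹) k)) :=
            sumPairA _ _ _
          _ = star (∏ k, U (x.2.2.1 k) (x.2.1 k)) := by
            congr 1
            exact Equiv.prod_comp σ⁻¹ (fun k => U (x.2.2.1 k) (x.2.1 k))
      calc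
        _ = (if x.1 = i ∧ x.2.2.2 = j then (1:ℂ) else 0) *
            (((Nat.factorial K : ℂ))⁻¹ *
            ∑ a : Fin K → Fin d, ∑ b : Fin K → Fin d, ∑ σ : Equiv.Perm (Fin K),
              (if x.2.1 = a ∘ σ ∧ x.2.2.1 = b ∘ σ then (1:ℂ) else 0) *
                star (∏ k, U (b k) (a k))) := by
          rw [Finset.mul_sum, Finset.mul_sum]
          refine Finset.sum_congr rfl fun a _ => ?_
          rw [Finset.mul_sum, Finset.mul_sum]
          refine Finset.sum_congr rfl fun b _ => ?_
          rw [← Finset.sum_mul]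
          ring
        _ = (if x.1 = i ∧ x.2.2.2 = j then (1:ℂ) else 0) *
            (((Nat.factorial K : ℂ))⁻¹ *
            ∑ σ : Equiv.Perm (Fin K), ∑ a : Fin K → Fin d, ∑ b : Fin K → Fin d,
              (if x.2.1 = a ∘ σ ∧ x.2.2.1 = b ∘ σ then (1:ℂ) else 0) *
                star (∏ k, U (b k) (a k))) := by
          congr 1; congr 1
          rw [show (∑ a : Fin K → Fin d, ∑ b : Fin K → Fin d, ∑ σ : Equiv.Perm (Fin K),
              (if x.2.1 = a ∘ σ ∧ x.2.2.1 = b ∘ σ then (1:ℂ) else 0) *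
                star (∏ k, U (b k) (a k)))
            = ∑ a : Fin K → Fin d, ∑ σ : Equiv.Perm (Fin K), ∑ b : Fin K → Fin d,
              (if x.2.1 = a ∘ σ ∧ x.2.2.1 = b ∘ σ then (1:ℂ) else 0) *
                star (∏ k, U (b k) (a k)) from
            Finset.sum_congr rfl fun a _ => Finset.sum_comm]
          exact Finset.sum_comm
        _ = (if x.1 = i ∧ x.2.2.2 = j then (1:ℂ) else 0) *
            (((Nat.factorial K : ℂ))⁻¹ *
              ((Nat.factorial K : ℂ) * star (∏ k, U (x.2.2.1 k) (x.2.1 k)))) := by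
          congr 1; congr 1
          rw [Finset.sum_congr rfl (fun σ _ => hstep σ)]
          rw [Finset.sum_const, Finset.card_univ, Fintype.card_perm, Fintype.card_fin,
            nsmul_eq_mul]
        _ = _ := by
          rw [← mul_assoc ((Nat.factorial K : ℂ))⁻¹, inv_mul_cancel₀ (by
            exact_mod_cast Nat.cast_ne_zero.mpr (Nat.factorial_ne_zero K)), one_mul]

lemma actK_eq_form {d0 d K : ℕ} (N : Matrix (IxK d0 d K) (IxK d0 d K) ℂ)
    (U : Matrix (Fin d) (Fin d) ℂ) (i j k l : Fin d0) :
    actK N (choi U) (i, j) (k, l) =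
      star (wvec d0 d K U i j) ⬝ᵥ (N *ᵥ wvec d0 d K U k l) := by
  have hNw : ∀ x : IxK d0 d K, (N *ᵥ wvec d0 d K U k l) x
      = ∑ a', ∑ b', N x (k, a', b', l) * star (∏ m, U (b' m) (a' m)) := by
    intro x
    show ∑ y, N x y * wvec d0 d K U k l y = _
    exact sumCollapseA (fun y => N x y) k l (fun a b => star (∏ m, U (b m) (a m)))
  symm
  have step1 :
      star (wvec d0 d K U i j) ⬝ᵥ (N *ᵥ wvec d0 d K U k l)
        = ∑ x : IxK d0 d K, (N *ᵥ wvec d0 d K U k l) x *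
            ((if x.1 = i ∧ x.2.2.2 = j then (1:ℂ) else 0) *
              (∏ m, U (x.2.2.1 m) (x.2.1 m))) := by
    simp only [dotProduct, Pi.star_apply]
    refine Finset.sum_congr rfl fun x _ => ?_
    simp only [wvec, star_mul', star_star, apply_ite (star : ℂ → ℂ), star_one, star_zero]
    ring
  have step2 : (∑ x : IxK d0 d K, (N *ᵥ wvec d0 d K U k l) x *
            ((if x.1 = i ∧ x.2.2.2 = j then (1:ℂ) else 0) *
              (∏ m, U (x.2.2.1 m) (x.2.1 m))))
      = ∑ a, ∑ b, (N *ᵥ wvec d0 d K U k l) (i, a, b, j) * (∏ m, U (b m) (a m)) :=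
    sumCollapseA (fun x => (N *ᵥ wvec d0 d K U k l) x) i j (fun a b => ∏ m, U (b m) (a m))
  rw [step1, step2]
  simp only [hNw, actK, choi]
  refine Finset.sum_congr rfl fun a _ => Finset.sum_congr rfl fun b _ => ?_
  rw [Finset.sum_mul]
  refine Finset.sum_congr rfl fun a' _ => ?_
  rw [Finset.sum_mul]
  refine Finset.sum_congr rfl fun b' _ => ?_
  rw [Finset.prod_mul_distrib, ← star_prod]
  ring

/-- If `Tr_{I O}(P_sym N P_sym) = c · J_id` then `N` neutralizes all
unitary operations. -/
theorem neutralization_of_symmetric_subspace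
    (d d0 K : ℕ) (hd : 1 ≤ d) (hd0 : 1 ≤ d0) (hK : 1 ≤ K)
    (N : Matrix (IxK d0 d K) (IxK d0 d K) ℂ) (hN : N.PosSemidef)
    (htr : N.trace.re ≤ (d : ℝ) ^ K * d0)
    (c : ℝ) (hc : 0 ≤ c)
    (hsym : ptrIO (PsymF d0 d K * N * PsymF d0 d K) =
      (c : ℂ) • choi (1 : Matrix (Fin d0) (Fin d0) ℂ)) :
    ∀ U ∈ Matrix.unitaryGroup (Fin d) ℂ,
      ∃ cU : ℝ, 0 ≤ cU ∧
        actK N (choi U) = (cU : ℂ) • choi (1 : Matrix (Fin d0) (Fin d0) ℂ) := by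
  intro U _
  classical
  set P := PsymF d0 d K with hPdef
  set M := P * N * P with hMdef
  have hP : Pᴴ = P := PsymF_herm d0 d K
  have hMpsd : M.PosSemidef := by
    have h := hN.mul_mul_conjTranspose_same P
    rwa [hP] at h
  have hPw : ∀ i j, P *ᵥ wvec d0 d K U i j = wvec d0 d K U i j :=
    fun i j => PsymF_fix d0 d K U i j
  -- the quadratic form through `N` equals the one through `M`
  have hG : ∀ i j k l : Fin d0,
      star (wvec d0 d K U i j) ⬝ᵥ (N *ᵥ wvec d0 d K U k l)
        = star (wvec d0 d K U i j) ⬝ᵥ (M *ᵥ wvec d0 d K U k l) := by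
    intro i j k l
    have h1 : M *ᵥ wvec d0 d K U k l = P *ᵥ (N *ᵥ (P *ᵥ wvec d0 d K U k l)) := by
      rw [hMdef, ← Matrix.mulVec_mulVec, ← Matrix.mulVec_mulVec]
    have h2 : star (wvec d0 d K U i j) ᵥ* P = star (wvec d0 d K U i j) := by
      have h3 := Matrix.star_mulVec (M := P) (v := wvec d0 d K U i j)
      rw [hPw, hP] at h3
      exact h3.symm
    rw [h1, hPw]
    conv_rhs => rw [Matrix.dotProduct_mulVec, h2]
  -- entries of the partial trace of `M`
  have hptr : ∀ (i j k l : Fin d0), (∑ a, ∑ b, M (i, a, b, j) (k, a, b, l))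
      = (c : ℂ) * ((if j = i then 1 else 0) * (if l = k then 1 else 0)) := by
    intro i j k l
    have h := congrFun (congrFun hsym ((i, j) : Fin d0 × Fin d0)) ((k, l) : Fin d0 × Fin d0)
    simpa [ptrIO, choi, Matrix.one_apply, Matrix.smul_apply, apply_ite (star : ℂ → ℂ)]
      using h
  -- single-vector computations
  have hmvs : ∀ y : IxK d0 d K, M *ᵥ Pi.single y 1 = fun z => M z y := by
    intro y; funext z
    simp [Matrix.mulVec, dotProduct, Pi.single_apply]
  have hsd : ∀ (x : IxK d0 d K) (u : IxK d0 d K → ℂ),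
      star (Pi.single x (1 : ℂ)) ⬝ᵥ u = u x := by
    intro x u
    simp [dotProduct, Pi.single_apply, apply_ite (star : ℂ → ℂ)]
  -- columns with mismatched `I0`/`O0` labels vanish
  have hcol0 : ∀ (i j : Fin d0), i ≠ j → ∀ a b (y : IxK d0 d K), M y (i, a, b, j) = 0 := by
    intro i j hij a b y
    have hsum : (∑ p : (Fin K → Fin d) × (Fin K → Fin d),
        M (i, p.1, p.2, j) (i, p.1, p.2, j)) = 0 := by
      rw [Fintype.sum_prod_type, hptr i j i j,
        if_neg (show ¬(j = i) from fun h => hij h.symm)]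
      ring
    have hnn : ∀ p ∈ (univ : Finset ((Fin K → Fin d) × (Fin K → Fin d))),
        0 ≤ M (i, p.1, p.2, j) (i, p.1, p.2, j) := by
      intro p _
      have h := hMpsd.dotProduct_mulVec_nonneg (Pi.single (i, p.1, p.2, j) 1)
      rwa [hmvs, hsd] at h
    have hdiag := (Finset.sum_eq_zero_iff_of_nonneg hnn).mp hsum (a, b) (mem_univ _)
    have hq : star (Pi.single ((i, a, b, j) : IxK d0 d K) (1:ℂ)) ⬝ᵥ
        (M *ᵥ Pi.single (i, a, b, j) 1) = 0 := by
      rw [hmvs, hsd]; exact hdiag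
    have hker := (hMpsd.dotProduct_mulVec_zero_iff _).mp hq
    rw [hmvs] at hker
    exact congrFun hker y
  -- difference quadratic form
  have hps : ∀ x y : IxK d0 d K,
      star (Pi.single x (1:ℂ) - Pi.single y 1) ⬝ᵥ
        (M *ᵥ (Pi.single x 1 - Pi.single y 1))
      = M x x - M x y - M y x + M y y := by
    intro x y
    rw [Matrix.mulVec_sub, hmvs, hmvs, star_sub, sub_dotProduct,
      dotProduct_sub, dotProduct_sub, hsd, hsd, hsd, hsd]
    ring
  -- columns only depend on slot labels, not on the (equal) `I0`/`O0` labels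
  have hcoleq : ∀ (i k : Fin d0) (a b : Fin K → Fin d) (y : IxK d0 d K),
      M y (i, a, b, i) = M y (k, a, b, k) := by
    intro i k a b y
    have hsum : (∑ p : (Fin K → Fin d) × (Fin K → Fin d),
        star (Pi.single ((i, p.1, p.2, i) : IxK d0 d K) (1:ℂ) -
            Pi.single (k, p.1, p.2, k) 1) ⬝ᵥ
          (M *ᵥ (Pi.single ((i, p.1, p.2, i) : IxK d0 d K) (1:ℂ) -
            Pi.single (k, p.1, p.2, k) 1))) = 0 := by
      calc
        _ = ∑ p : (Fin K → Fin d) × (Fin K → Fin d),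
            (M (i, p.1, p.2, i) (i, p.1, p.2, i) - M (i, p.1, p.2, i) (k, p.1, p.2, k)
              - M (k, p.1, p.2, k) (i, p.1, p.2, i) + M (k, p.1, p.2, k) (k, p.1, p.2, k)) :=
          Finset.sum_congr rfl fun p _ => hps _ _
        _ = 0 := by
          rw [Finset.sum_add_distrib, Finset.sum_sub_distrib, Finset.sum_sub_distrib,
            Fintype.sum_prod_type, Fintype.sum_prod_type, Fintype.sum_prod_type,
            Fintype.sum_prod_type, hptr i i i i, hptr i i k k, hptr k k i i, hptr k k k k]
          simp
    have hnn : ∀ p ∈ (univ : Finset ((Fin K → Fin d) × (Fin K → Fin d))),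
        0 ≤ star (Pi.single ((i, p.1, p.2, i) : IxK d0 d K) (1:ℂ) -
            Pi.single (k, p.1, p.2, k) 1) ⬝ᵥ
          (M *ᵥ (Pi.single ((i, p.1, p.2, i) : IxK d0 d K) (1:ℂ) -
            Pi.single (k, p.1, p.2, k) 1)) := fun p _ => hMpsd.dotProduct_mulVec_nonneg _
    have h0 := (Finset.sum_eq_zero_iff_of_nonneg hnn).mp hsum (a, b) (mem_univ _)
    have hker := (hMpsd.dotProduct_mulVec_zero_iff _).mp h0
    rw [Matrix.mulVec_sub, hmvs, hmvs] at hker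
    have h2 := congrFun hker y
    simp only [Pi.sub_apply, Pi.zero_apply] at h2
    exact sub_eq_zero.mp h2
  -- `M` kills the off-diagonal vectors
  have hMw0 : ∀ i j : Fin d0, i ≠ j → M *ᵥ wvec d0 d K U i j = 0 := by
    intro i j hij
    funext y
    show (∑ x, M y x * wvec d0 d K U i j x) = 0
    refine Finset.sum_eq_zero fun x _ => ?_
    by_cases h : x.1 = i ∧ x.2.2.2 = j
    · have hx : x = (i, x.2.1, x.2.2.1, j) := by
        obtain ⟨x1, a, b, x4⟩ := x
        obtain ⟨h1, h2⟩ := h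
        simp_all
      rw [hx, hcol0 i j hij _ _ y, zero_mul]
    · show M y x * ((if x.1 = i ∧ x.2.2.2 = j then (1:ℂ) else 0) * _) = 0
      rw [if_neg h, zero_mul, mul_zero]
  -- `M *ᵥ w k k` does not depend on `k`
  set z0 : Fin d0 := ⟨0, hd0⟩ with hz0
  have hMwk : ∀ kk : Fin d0, M *ᵥ wvec d0 d K U kk kk = M *ᵥ wvec d0 d K U z0 z0 := by
    intro kk
    funext y
    have h1 : (M *ᵥ wvec d0 d K U kk kk) y
        = ∑ a, ∑ b, M y (kk, a, b, kk) * star (∏ m, U (b m) (a m)) := by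
      show ∑ x, M y x * wvec d0 d K U kk kk x = _
      exact sumCollapseA (fun x => M y x) kk kk (fun a b => star (∏ m, U (b m) (a m)))
    have h2 : (M *ᵥ wvec d0 d K U z0 z0) y
        = ∑ a, ∑ b, M y (z0, a, b, z0) * star (∏ m, U (b m) (a m)) := by
      show ∑ x, M y x * wvec d0 d K U z0 z0 x = _
      exact sumCollapseA (fun x => M y x) z0 z0 (fun a b => star (∏ m, U (b m) (a m)))
    rw [h1, h2]
    exact Finset.sum_congr rfl fun a _ => Finset.sum_congr rfl fun b _ => by
      rw [hcoleq kk z0 a b y]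
  -- moving `M` through the dot product
  have hvm : ∀ i j : Fin d0,
      star (wvec d0 d K U i j) ᵥ* M = star (M *ᵥ wvec d0 d K U i j) := by
    intro i j
    rw [Matrix.star_mulVec, hMpsd.1.eq]
  -- the constant
  have hpos : 0 ≤ star (wvec d0 d K U z0 z0) ⬝ᵥ (M *ᵥ wvec d0 d K U z0 z0) := hMpsd.dotProduct_mulVec_nonneg _
  set G0 : ℂ := star (wvec d0 d K U z0 z0) ⬝ᵥ (M *ᵥ wvec d0 d K U z0 z0) with hG0
  have him : G0.im = 0 := by
    have h := (Complex.le_def.mp hpos).2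
    simpa using h.symm
  have hre0 : 0 ≤ G0.re := by
    have h := (Complex.le_def.mp hpos).1
    simpa using h
  have hcoe : ((G0.re : ℝ) : ℂ) = G0 := Complex.ext (by simp) (by simp [him])
  refine ⟨G0.re, hre0, ?_⟩
  funext p q
  obtain ⟨i, j⟩ := p
  obtain ⟨k, l⟩ := q
  rw [actK_eq_form N U i j k l, hG i j k l]
  have hrhs : ((G0.re : ℂ) • choi (1 : Matrix (Fin d0) (Fin d0) ℂ)) (i, j) (k, l)
      = (G0.re : ℂ) * ((if j = i then 1 else 0) * (if l = k then 1 else 0)) := by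
    simp [choi, Matrix.one_apply, apply_ite (star : ℂ → ℂ)]
  rw [hrhs]
  by_cases hij : i = j
  · subst hij
    by_cases hkl : k = l
    · subst hkl
      rw [if_pos rfl, if_pos rfl, mul_one, mul_one]
      calc
        star (wvec d0 d K U i i) ⬝ᵥ (M *ᵥ wvec d0 d K U k k)
            = star (wvec d0 d K U i i) ⬝ᵥ (M *ᵥ wvec d0 d K U z0 z0) := by rw [hMwk k]
        _ = (star (wvec d0 d K U i i) ᵥ* M) ⬝ᵥ wvec d0 d K U z0 z0 :=
          Matrix.dotProduct_mulVec _ _ _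
        _ = star (M *ᵥ wvec d0 d K U i i) ⬝ᵥ wvec d0 d K U z0 z0 := by rw [hvm]
        _ = star (M *ᵥ wvec d0 d K U z0 z0) ⬝ᵥ wvec d0 d K U z0 z0 := by rw [hMwk i]
        _ = (star (wvec d0 d K U z0 z0) ᵥ* M) ⬝ᵥ wvec d0 d K U z0 z0 := by rw [hvm]
        _ = G0 := (Matrix.dotProduct_mulVec _ _ _).symm
        _ = (G0.re : ℂ) := hcoe.symm
    · rw [hMw0 k l hkl]
      rw [if_neg (show ¬(l = k) from fun h => hkl h.symm)]
      simp
  · rw [Matrix.dotProduct_mulVec, hvm, hMw0 i j hij]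
    rw [if_neg (show ¬(j = i) from fun h => hij h.symm)]
    simp
end
end

section
/- Let m, n ≥ 1, let X be a PSD matrix on ℂ^m ⊗ ℂ^n, let v ∈ ℂ^m be a unit vector and c ≥ 0. If the partial trace of X over the second factor satisfies Tr_B X = c · v v†, then there exists a PSD n×n matrix σ with Tr σ = c such that X = (v v†) ⊗ σ. -/
/-!
Statement 9: if the partial trace over the second factor of a PSD matrix `X` on
`ℂ^m ⊗ ℂ^n` is `c · v v†` for a unit vector `v`, then `X = (v v†) ⊗ σ` for some
PSD `σ` with `Tr σ = c`.
-/

open Matrix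
open scoped ComplexOrder

noncomputable section

theorem psd_factorizes_of_rank_one_partial_trace
    (m n : ℕ) (hm : 1 ≤ m) (hn : 1 ≤ n)
    (X : Matrix (Fin m × Fin n) (Fin m × Fin n) ℂ) (hX : X.PosSemidef)
    (v : Fin m → ℂ) (hv : ∑ i, star (v i) * v i = 1)
    (c : ℝ) (hc : 0 ≤ c)
    (htr : ∀ i j : Fin m, (∑ k, X (i, k) (j, k)) = (c : ℂ) * (v i * star (v j))) :
    ∃ σ : Matrix (Fin n) (Fin n) ℂ, σ.PosSemidef ∧ σ.trace = (c : ℂ) ∧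
      ∀ (i j : Fin m) (k l : Fin n), X (i, k) (j, l) = v i * star (v j) * σ k l := by
  classical
  set B : Matrix (Fin m × Fin n) (Fin n) ℂ :=
    Matrix.of (fun p b => v p.1 * (if p.2 = b then 1 else 0)) with hB
  set σ : Matrix (Fin n) (Fin n) ℂ := Bᴴ * X * B with hσ
  have hσentry : ∀ a b, σ a b = ∑ i, ∑ j, star (v i) * X (i,a) (j,b) * v j := by
    intro a b
    rw [Finset.sum_comm, hσ, Matrix.mul_apply]
    rw [Fintype.sum_prod_type]
    refine Finset.sum_congr rfl fun j _ => ?_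
    rw [show (∑ l : Fin n, (Bᴴ * X) a (j, l) * B (j, l) b)
        = (Bᴴ * X) a (j, b) * v j by
      simp [hB, mul_ite]]
    rw [Matrix.mul_apply, Fintype.sum_prod_type]
    rw [Finset.sum_mul]
    refine Finset.sum_congr rfl fun i _ => ?_
    rw [show (∑ k : Fin n, Bᴴ a (i, k) * X (i, k) (j, b))
        = star (v i) * X (i, a) (j, b) by
      simp [hB, Matrix.conjTranspose_apply, mul_ite, apply_ite (starRingEnd ℂ), ite_mul]]
  -- Step 1 : vectors orthogonal to v tensored with basis vectors are in the kernel
  have key : ∀ (w : Fin m → ℂ), (∑ i, star (v i) * w i) = 0 → ∀ k : Fin n,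
      X *ᵥ (fun p => if p.2 = k then w p.1 else 0) = 0 := by
    intro w hw k
    set u : Fin n → (Fin m × Fin n → ℂ) :=
      fun k p => if p.2 = k then w p.1 else 0 with hu
    have hq : ∀ k, star (u k) ⬝ᵥ (X *ᵥ u k)
        = ∑ i, ∑ j, star (w i) * X (i, k) (j, k) * w j := by
      intro k
      rw [dotProduct, Fintype.sum_prod_type]
      rw [show (∑ i, ∑ l, star (u k) (i, l) * (X *ᵥ u k) (i, l))
          = ∑ i, star (w i) * (X *ᵥ u k) (i, k) by
        refine Finset.sum_congr rfl fun i _ => ?_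
        simp [hu, Pi.star_apply, ite_mul, apply_ite star]]
      refine Finset.sum_congr rfl fun i _ => ?_
      rw [mulVec, dotProduct, Fintype.sum_prod_type]
      rw [Finset.mul_sum]
      refine Finset.sum_congr rfl fun j _ => ?_
      simp [hu, mul_ite, mul_assoc]
    have hsum : ∑ k : Fin n, star (u k) ⬝ᵥ (X *ᵥ u k) = 0 := by
      have hwv : ∑ i, star (w i) * v i = 0 := by
        have := congrArg star hw
        simpa [Finset.sum_comm, mul_comm, star_sum] using this
      calc ∑ k : Fin n, star (u k) ⬝ᵥ (X *ᵥ u k)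
          = ∑ k : Fin n, ∑ i, ∑ j, star (w i) * X (i, k) (j, k) * w j := by
            exact Finset.sum_congr rfl fun k _ => hq k
        _ = ∑ i, ∑ j, star (w i) * (∑ k, X (i, k) (j, k)) * w j := by
            rw [Finset.sum_comm]
            refine Finset.sum_congr rfl fun i _ => ?_
            rw [Finset.sum_comm]
            refine Finset.sum_congr rfl fun j _ => ?_
            simp [Finset.sum_mul, Finset.mul_sum]
        _ = ∑ i, ∑ j, (c : ℂ) * ((star (w i) * v i) * (star (v j) * w j)) := by
            refine Finset.sum_congr rfl fun i _ => Finset.sum_congr rfl fun j _ => ?_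
            rw [htr i j]; ring
        _ = (c : ℂ) * ((∑ i, star (w i) * v i) * (∑ j, star (v j) * w j)) := by
            simp only [Finset.mul_sum, Finset.sum_mul]
            conv_rhs => rw [Finset.sum_comm]
        _ = 0 := by rw [hwv]; ring
    have hzero : star (u k) ⬝ᵥ (X *ᵥ u k) = 0 := by
      have hnn : ∀ k ∈ Finset.univ, (0:ℂ) ≤ star (u k) ⬝ᵥ (X *ᵥ u k) :=
        fun k _ => hX.dotProduct_mulVec_nonneg (u k)
      exact (Finset.sum_eq_zero_iff_of_nonneg hnn).mp hsum k (Finset.mem_univ k)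
    exact (hX.dotProduct_mulVec_zero_iff (u k)).mp hzero
  -- Step 2 : entrywise consequence
  set f : Fin m → Fin n → Fin n → ℂ :=
    fun i a b => ∑ j, X (i, a) (j, b) * v j with hf
  have relA : ∀ (i : Fin m) (a : Fin n) (j : Fin m) (b : Fin n),
      X (i, a) (j, b) = star (v j) * f i a b := by
    intro i a j b
    set w : Fin m → ℂ := fun i' => (if i' = j then 1 else 0) - star (v j) * v i' with hw
    have hworth : ∑ i', star (v i') * w i' = 0 := by
      simp only [hw, mul_sub, Finset.sum_sub_distrib, mul_ite, mul_one, mul_zero,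
        Finset.sum_ite_eq', Finset.mem_univ, if_true]
      rw [show (∑ i', star (v i') * (star (v j) * v i'))
          = star (v j) * ∑ i', star (v i') * v i' by
        rw [Finset.mul_sum]; exact Finset.sum_congr rfl fun i' _ => by ring]
      rw [hv, mul_one, sub_self]
    have hk := congrFun (key w hworth b) (i, a)
    simp only [mulVec, dotProduct, Fintype.sum_prod_type, Pi.zero_apply] at hk
    rw [show (∑ j' : Fin m, ∑ l : Fin n,
        X (i, a) (j', l) * (if (j', l).2 = b then w (j', l).1 else 0))
        = ∑ j' : Fin m, X (i, a) (j', b) * w j' by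
      refine Finset.sum_congr rfl fun j' _ => ?_
      simp [mul_ite]] at hk
    simp only [hw, mul_sub, Finset.sum_sub_distrib, mul_ite, mul_one, mul_zero,
      Finset.sum_ite_eq', Finset.mem_univ, if_true, sub_eq_zero] at hk
    rw [hk, hf]
    rw [Finset.mul_sum]
    refine Finset.sum_congr rfl fun j' _ => ?_
    ring
  have herm : ∀ (p q : Fin m × Fin n), X p q = star (X q p) :=
    fun p q => (hX.1.apply p q).symm
  have relB : ∀ (i : Fin m) (a : Fin n) (j : Fin m) (b : Fin n),
      X (i, a) (j, b) = v i * star (f j b a) := by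
    intro i a j b
    rw [herm (i, a) (j, b), relA j b i a]
    simp [star_mul']
  have hfσ : ∀ (i : Fin m) (a b : Fin n), f i a b = v i * σ a b := by
    intro i a b
    have h1 : f i a b = v i * (∑ j, star (f j b a) * v j) := by
      rw [hf, Finset.mul_sum]
      refine Finset.sum_congr rfl fun j _ => ?_
      rw [relB i a j b]; ring
    have h2 : σ a b = ∑ j, star (f j b a) * v j := by
      rw [hσentry a b]
      calc (∑ i', ∑ j, star (v i') * X (i', a) (j, b) * v j)
          = ∑ i', (star (v i') * v i') * (∑ j, star (f j b a) * v j) := by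
            refine Finset.sum_congr rfl fun i' _ => ?_
            rw [Finset.mul_sum]
            refine Finset.sum_congr rfl fun j _ => ?_
            rw [relB i' a j b]; ring
        _ = (∑ i', star (v i') * v i') * (∑ j, star (f j b a) * v j) := by
            rw [Finset.sum_mul]
        _ = ∑ j, star (f j b a) * v j := by rw [hv, one_mul]
    rw [h1, h2]
  have hXfac : ∀ (i j : Fin m) (k l : Fin n),
      X (i, k) (j, l) = v i * star (v j) * σ k l := by
    intro i j k l
    rw [relA i k j l, hfσ i k l]; ring
  refine ⟨σ, hX.conjTranspose_mul_mul_same B, ?_, hXfac⟩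
  -- trace computation
  rw [Matrix.trace]
  calc (∑ a, σ.diag a)
      = ∑ a, ∑ i, ∑ j, star (v i) * X (i, a) (j, a) * v j := by
        exact Finset.sum_congr rfl fun a _ => hσentry a a
    _ = ∑ i, ∑ j, star (v i) * (∑ a, X (i, a) (j, a)) * v j := by
        rw [Finset.sum_comm]
        refine Finset.sum_congr rfl fun i _ => ?_
        rw [Finset.sum_comm]
        refine Finset.sum_congr rfl fun j _ => ?_
        simp [Finset.sum_mul, Finset.mul_sum]
    _ = ∑ i, ∑ j, (c : ℂ) * ((star (v i) * v i) * (star (v j) * v j)) := by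
        refine Finset.sum_congr rfl fun i _ => Finset.sum_congr rfl fun j _ => ?_
        rw [htr i j]; ring
    _ = (c : ℂ) * ((∑ i, star (v i) * v i) * (∑ j, star (v j) * v j)) := by
        simp only [Finset.mul_sum, Finset.sum_mul]
        conv_rhs => rw [Finset.sum_comm]
    _ = (c : ℂ) := by rw [hv, one_mul, mul_one]

end
end

section
/- Let S be a PSD matrix on I0⊗I1⊗O1⊗O0 (each factor ℂ²) and p ≥ 0 such that S commutes with U_{I1} ⊗ U_{O0} for every 2×2 unitary U (where U_{I1}, U_{O0} act as U on the indicated factor and as the identity elsewhere), and such that Tr_{I1 O1}[S (J_U^T ⊗ I_{I0 O0})] = p · J_{U⁻¹} for every 2×2 unitary U. Then S = p · J_Y^{I0 O1} ⊗ J_Y^{I1 O0}, i.e., S is p times the tensor product of the operator J_Y placed on the pair of factors (I0, O1) and the operator J_Y placed on the pair of factors (I1, O0), where J_Y = 2|ψ⁻⟩⟨ψ⁻| with |ψ⁻⟩ = (|01⟩ − |10⟩)/√2 (so J_Y is the Choi matrix of the Pauli-Y unitary channel). -/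
/-!
Statement 17: a PSD one-slot comb element `S` on `I0 ⊗ I1 ⊗ O1 ⊗ O0` (qubits)
commuting with `U_{I1} ⊗ U_{O0}` for all unitaries `U` and realizing
`Tr_{I1 O1}[S (J_Uᵀ ⊗ I)] = p · J_{U⁻¹}` must be `S = p · J_Y^{I0 O1} ⊗ J_Y^{I1 O0}`,
where `J_Y = 2|ψ⁻⟩⟨ψ⁻|` is the Choi matrix of the Pauli-Y channel.
-/

open Matrix Finset
open scoped ComplexOrder

noncomputable section

/-- Index type for one-slot combs: `I0 × I1 × O1 × O0`. -/
abbrev Ix1 (d0 d : ℕ) := Fin d0 × Fin d × Fin d × Fin d0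

/-- `Tr_{I1 O1}[S (Jᵀ ⊗ I_{I0 O0})]`: action of a one-slot comb on a Choi matrix. -/
def act1 {d0 d : ℕ} (S : Matrix (Ix1 d0 d) (Ix1 d0 d) ℂ)
    (J : Matrix (Fin d × Fin d) (Fin d × Fin d) ℂ) :
    Matrix (Fin d0 × Fin d0) (Fin d0 × Fin d0) ℂ :=
  fun x y => ∑ a, ∑ b, ∑ a', ∑ b',
    S (x.1, a, b, x.2) (y.1, a', b', y.2) * J (a, b) (a', b')

/-- `V ⊗ V` acting on the factors `I1` and `O0` of `I0 × I1 × O1 × O0`. -/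
def onI1O0 (V : Matrix (Fin 2) (Fin 2) ℂ) : Matrix (Ix1 2 2) (Ix1 2 2) ℂ :=
  fun x y => (if x.1 = y.1 then 1 else 0) * V x.2.1 y.2.1 *
    (if x.2.2.1 = y.2.2.1 then 1 else 0) * V x.2.2.2 y.2.2.2

/-- The singlet state `|ψ⁻⟩ = (|01⟩ − |10⟩)/√2`. -/
def psiMinus : Fin 2 × Fin 2 → ℂ := fun x =>
  if x = (0, 1) then ((Real.sqrt 2 : ℂ))⁻¹
  else if x = (1, 0) then -((Real.sqrt 2 : ℂ))⁻¹ else 0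

/-- `J_Y = 2 |ψ⁻⟩⟨ψ⁻|`, the Choi matrix of the Pauli-`Y` channel. -/
def JY : Matrix (Fin 2 × Fin 2) (Fin 2 × Fin 2) ℂ :=
  fun x y => 2 * psiMinus x * star (psiMinus y)

/-! ### Auxiliary machinery -/

def Pm : Matrix (Fin 2) (Fin 2) ℂ := !![1, 0; 0, Complex.I]
def Xm : Matrix (Fin 2) (Fin 2) ℂ := !![0, 1; 1, 0]
def Rm : Matrix (Fin 2) (Fin 2) ℂ := !![((3/5:ℝ):ℂ), ((4/5:ℝ):ℂ); -((4/5:ℝ):ℂ), ((3/5:ℝ):ℂ)]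

lemma Pm_mem : Pm ∈ Matrix.unitaryGroup (Fin 2) ℂ := by
  rw [Matrix.mem_unitaryGroup_iff]
  ext i j
  fin_cases i <;> fin_cases j <;>
    simp [Pm, Matrix.mul_apply, Fin.sum_univ_two, Matrix.one_apply, Complex.ext_iff]

lemma Xm_mem : Xm ∈ Matrix.unitaryGroup (Fin 2) ℂ := by
  rw [Matrix.mem_unitaryGroup_iff]
  ext i j
  fin_cases i <;> fin_cases j <;>
    simp [Xm, Matrix.mul_apply, Fin.sum_univ_two, Matrix.one_apply, Complex.ext_iff]

lemma Rm_mem : Rm ∈ Matrix.unitaryGroup (Fin 2) ℂ := by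
  rw [Matrix.mem_unitaryGroup_iff]
  ext i j
  fin_cases i <;> fin_cases j <;>
    simp [Rm, Matrix.mul_apply, Fin.sum_univ_two, Matrix.one_apply, Complex.conj_ofReal,
      ← Complex.ofReal_mul, ← Complex.ofReal_add, ← Complex.ofReal_neg] <;>
    norm_num [map_div₀, map_ofNat]

lemma mulRight (V : Matrix (Fin 2) (Fin 2) ℂ) (S : Matrix (Ix1 2 2) (Ix1 2 2) ℂ)
    (x y : Ix1 2 2) :
    (S * onI1O0 V) x y
      = ∑ ka, ∑ kc, S x (y.1, ka, y.2.2.1, kc) * (V ka y.2.1 * V kc y.2.2.2) := by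
  obtain ⟨j0, a', b', p0⟩ := y
  rw [Matrix.mul_apply]
  simp only [Fintype.sum_prod_type]
  fin_cases j0 <;> fin_cases b' <;> simp [onI1O0, Fin.sum_univ_two, Fin.isValue]

lemma mulLeft (V : Matrix (Fin 2) (Fin 2) ℂ) (S : Matrix (Ix1 2 2) (Ix1 2 2) ℂ)
    (x y : Ix1 2 2) :
    (onI1O0 V * S) x y
      = ∑ ka, ∑ kc, V x.2.1 ka * V x.2.2.2 kc * S (x.1, ka, x.2.2.1, kc) y := by
  obtain ⟨i0, a, b, o0⟩ := x
  rw [Matrix.mul_apply]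
  simp only [Fintype.sum_prod_type]
  fin_cases i0 <;> fin_cases b <;> simp [onI1O0, Fin.sum_univ_two, Fin.isValue]

lemma szero (S : Matrix (Ix1 2 2) (Ix1 2 2) ℂ)
    (hP : S * onI1O0 Pm = onI1O0 Pm * S) :
    ∀ (i0 a b o0 j0 a' b' p0 : Fin 2), (a.val + o0.val ≠ a'.val + p0.val) →
      S (i0, a, b, o0) (j0, a', b', p0) = 0 := by
  intro i0 a b o0 j0 a' b' p0 h
  have key : ∀ (ua ub va vb : Fin 2) (c : ℂ),
      S (i0, ua, b, ub) (j0, va, b', vb) * c = 0 → c ≠ 0 →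
      S (i0, ua, b, ub) (j0, va, b', vb) = 0 := by
    intro ua ub va vb c h1 h2
    exact (mul_eq_zero.mp h1).resolve_right h2
  have e := congrFun (congrFun hP (i0, a, b, o0)) (j0, a', b', p0)
  rw [mulRight, mulLeft] at e
  fin_cases a <;> fin_cases o0 <;> fin_cases a' <;> fin_cases p0 <;>
    simp [Pm, Fin.sum_univ_two] at e h ⊢ <;>
    (first
      | exact key _ _ _ _ (Complex.I - 1) (by linear_combination e) (by simp [Complex.ext_iff])
      | exact key _ _ _ _ (-2) (by linear_combination e) (by norm_num)
      | exact key _ _ _ _ (1 - Complex.I) (by linear_combination e) (by simp [Complex.ext_iff])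
      | exact key _ _ _ _ (-1 - Complex.I) (by linear_combination e) (by simp [Complex.ext_iff])
      | exact key _ _ _ _ 2 (by linear_combination e) (by norm_num)
      | exact key _ _ _ _ (Complex.I + 1) (by linear_combination e) (by simp [Complex.ext_iff]))

lemma sflip (S : Matrix (Ix1 2 2) (Ix1 2 2) ℂ)
    (hX : S * onI1O0 Xm = onI1O0 Xm * S) :
    ∀ (i0 a b o0 j0 a' b' p0 : Fin 2),
      S (i0, a, b, o0) (j0, a', b', p0) = S (i0, a+1, b, o0+1) (j0, a'+1, b', p0+1) := by
  intro i0 a b o0 j0 a' b' p0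
  have e := congrFun (congrFun hX (i0, a, b, o0)) (j0, a'+1, b', p0+1)
  rw [mulRight, mulLeft] at e
  fin_cases a <;> fin_cases o0 <;> fin_cases a' <;> fin_cases p0 <;>
    simp [Xm, Fin.sum_univ_two] at e ⊢ <;>
    first | exact e | exact e.symm | linear_combination e

lemma sR (S : Matrix (Ix1 2 2) (Ix1 2 2) ℂ)
    (hz : ∀ (i0 a b o0 j0 a' b' p0 : Fin 2), (a.val + o0.val ≠ a'.val + p0.val) →
      S (i0, a, b, o0) (j0, a', b', p0) = 0)
    (hR : S * onI1O0 Rm = onI1O0 Rm * S) :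
    ∀ (i0 b j0 b' : Fin 2),
      S (i0, 0, b, 0) (j0, 0, b', 0)
        = S (i0, 0, b, 1) (j0, 0, b', 1) + S (i0, 1, b, 0) (j0, 0, b', 1) := by
  intro i0 b j0 b'
  have e := congrFun (congrFun hR (i0, 0, b, 0)) (j0, 0, b', 1)
  rw [mulRight, mulLeft] at e
  simp [Rm, Fin.sum_univ_two] at e
  linear_combination (25/12 : ℂ) * e - (3/4 : ℂ) * hz i0 0 b 0 j0 0 b' 1 (by decide)
    + (4/3 : ℂ) * hz i0 0 b 0 j0 1 b' 0 (by decide) + hz i0 0 b 0 j0 1 b' 1 (by decide)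
    + (3/4 : ℂ) * hz i0 0 b 0 j0 0 b' 1 (by decide) + (4/3 : ℂ) * hz i0 1 b 1 j0 0 b' 1 (by decide)

/-- `α`: the coefficient of the identity on the `I1⊗O0` pair. -/
def al (S : Matrix (Ix1 2 2) (Ix1 2 2) ℂ) (q r : Fin 2 × Fin 2) : ℂ :=
  S (q.1, 0, q.2, 1) (r.1, 0, r.2, 1)

/-- `β`: the coefficient of the swap on the `I1⊗O0` pair. -/
def be (S : Matrix (Ix1 2 2) (Ix1 2 2) ℂ) (q r : Fin 2 × Fin 2) : ℂ :=
  S (q.1, 0, q.2, 1) (r.1, 1, r.2, 0)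

def JYe : Matrix (Fin 2 × Fin 2) (Fin 2 × Fin 2) ℂ :=
  fun q r => (if q = r then 1 else 0) - (if q.1 = r.2 ∧ q.2 = r.1 then 1 else 0)

lemma sliceS (S : Matrix (Ix1 2 2) (Ix1 2 2) ℂ)
    (hP : S * onI1O0 Pm = onI1O0 Pm * S)
    (hX : S * onI1O0 Xm = onI1O0 Xm * S)
    (hR : S * onI1O0 Rm = onI1O0 Rm * S) :
    ∀ (i0 a b o0 j0 a' b' p0 : Fin 2),
      S (i0, a, b, o0) (j0, a', b', p0)
        = al S (i0, b) (j0, b') * (if a = a' ∧ o0 = p0 then 1 else 0)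
          + be S (i0, b) (j0, b') * (if a = p0 ∧ a' = o0 then 1 else 0) := by
  have hz := szero S hP
  have hf := sflip S hX
  have ht := sR S hz hR
  intro i0 a b o0 j0 a' b' p0
  fin_cases a <;> fin_cases o0 <;> fin_cases a' <;> fin_cases p0 <;>
    simp [al, be] <;>
    (first
      | rfl
      | exact hz _ _ _ _ _ _ _ _ (by decide)
      | (have h := hf i0 1 b 0 j0 1 b' 0; simpa using h)
      | (have h := hf i0 1 b 0 j0 0 b' 1; simpa using h)
      | (have h2 := hf i0 1 b 0 j0 0 b' 1; simp at h2; rw [ht i0 b j0 b', h2])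
      | (have h1 := hf i0 1 b 1 j0 1 b' 1; simp at h1;
         have h2 := hf i0 1 b 0 j0 0 b' 1; simp at h2; rw [h1, ht i0 b j0 b', h2]))

def quadVec {ι : Type*} [DecidableEq ι] {m : ℕ} (u : Fin m → ι) (c : Fin m → ℂ) : ι → ℂ :=
  fun t => ∑ k, if t = u k then c k else 0

lemma quadForm {ι : Type*} [Fintype ι] [DecidableEq ι] {m : ℕ}
    (S : Matrix ι ι ℂ) (u : Fin m → ι) (c : Fin m → ℂ) :
    star (quadVec u c) ⬝ᵥ S *ᵥ (quadVec u c)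
      = ∑ k, ∑ l, (starRingEnd ℂ) (c k) * c l * S (u k) (u l) := by
  have h1 : ∀ x, (S *ᵥ (quadVec u c)) x = ∑ l, c l * S x (u l) := by
    intro x
    simp only [mulVec, dotProduct, quadVec, Finset.mul_sum, mul_ite, mul_zero]
    rw [Finset.sum_comm]
    congr 1; ext l
    rw [Finset.sum_ite_eq' Finset.univ (u l) (fun y => S x y * c l)]
    simp [mul_comm]
  simp only [dotProduct, h1, Pi.star_apply, quadVec, star_sum]
  have h2 : ∀ k t, star (if t = u k then c k else 0)
      = if t = u k then (starRingEnd ℂ) (c k) else 0 := by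
    intro k t; split <;> simp
  simp only [h2, Finset.sum_mul, ite_mul, zero_mul]
  rw [Finset.sum_comm]
  congr 1; ext k
  rw [Finset.sum_ite_eq' Finset.univ (u k)
    (fun x => (starRingEnd ℂ) (c k) * ∑ l, c l * S x (u l))]
  simp [Finset.mul_sum]; congr 1; ext l; ring

lemma eq_zero_of_nonneg_pair {a b : ℂ} (ha : 0 ≤ a) (hb : 0 ≤ b) (h : a + b = 0) : a = 0 := by
  have hab : a ≤ 0 := by
    have : a = -b := by linear_combination h
    rw [this]
    exact neg_nonpos.mpr hb
  exact le_antisymm hab ha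

lemma JY_eq_JYe : JY = JYe := by
  ext x y
  obtain ⟨x1, x2⟩ := x
  obtain ⟨y1, y2⟩ := y
  have h2 : ((Real.sqrt 2 : ℂ))⁻¹ * ((Real.sqrt 2 : ℂ))⁻¹ = 2⁻¹ := by
    have hs : (Real.sqrt 2 : ℂ) * (Real.sqrt 2 : ℂ) = 2 := by
      rw [← Complex.ofReal_mul, Real.mul_self_sqrt (by norm_num)]
      norm_num
    rw [← mul_inv, hs]
  fin_cases x1 <;> fin_cases x2 <;> fin_cases y1 <;> fin_cases y2 <;>
    simp [JY, JYe, psiMinus, Prod.ext_iff, Complex.conj_ofReal, map_inv₀] <;>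
    linear_combination (2:ℂ) * h2


theorem covariant_success_is_JY_tensor_JY
    (S : Matrix (Ix1 2 2) (Ix1 2 2) ℂ) (hS : S.PosSemidef) (p : ℝ) (hp : 0 ≤ p)
    (hcomm : ∀ U ∈ Matrix.unitaryGroup (Fin 2) ℂ, S * onI1O0 U = onI1O0 U * S)
    (hSucc : ∀ U ∈ Matrix.unitaryGroup (Fin 2) ℂ,
      act1 S (choi U) = (p : ℂ) • choi (star U)) :
    ∀ (i0 j0 a a' b b' o0 p0 : Fin 2),
      S (i0, a, b, o0) (j0, a', b', p0) =
        (p : ℂ) * JY (i0, b) (j0, b') * JY (a, o0) (a', p0) := by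
  have hsl := sliceS S (hcomm Pm Pm_mem) (hcomm Xm Xm_mem) (hcomm Rm Rm_mem)
  have hone : (1 : Matrix (Fin 2) (Fin 2) ℂ) ∈ Matrix.unitaryGroup (Fin 2) ℂ := by
    rw [Matrix.mem_unitaryGroup_iff]; simp
  -- success relations
  have hE : ∀ (i0 j0 o0 p0 : Fin 2),
      ((((if o0 = p0 then al S (i0, 0) (j0, 0) else 0) +
          if 0 = p0 ∧ 0 = o0 then be S (i0, 0) (j0, 0) else 0) +
            if 0 = p0 ∧ 1 = o0 then be S (i0, 0) (j0, 1) else 0) +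
          ((if 1 = p0 ∧ 0 = o0 then be S (i0, 1) (j0, 0) else 0) +
            ((if o0 = p0 then al S (i0, 1) (j0, 1) else 0) +
              if 1 = p0 ∧ 1 = o0 then be S (i0, 1) (j0, 1) else 0))) =
        if p0 = j0 then if o0 = i0 then (p:ℂ) else 0 else 0 := by
    intro i0 j0 o0 p0
    have e := congrFun (congrFun (hSucc 1 hone) (i0, o0)) (j0, p0)
    simp only [act1, choi, Matrix.one_apply, star_one, Fin.sum_univ_two,
      Matrix.smul_apply, smul_eq_mul] at e
    simp only [hsl] at e
    norm_num at e
    convert e using 2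
  -- quadratic-form inequalities
  have hq4 : ∀ (u : Fin 4 → Ix1 2 2) (c : Fin 4 → ℂ),
      (0:ℂ) ≤ ∑ k, ∑ l, (starRingEnd ℂ) (c k) * c l * S (u k) (u l) := by
    intro u c
    have hq := hS.dotProduct_mulVec_nonneg (quadVec u c)
    rwa [quadForm] at hq
  have hq2 : ∀ (u : Fin 2 → Ix1 2 2) (c : Fin 2 → ℂ),
      (0:ℂ) ≤ ∑ k, ∑ l, (starRingEnd ℂ) (c k) * c l * S (u k) (u l) := by
    intro u c
    have hq := hS.dotProduct_mulVec_nonneg (quadVec u c)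
    rwa [quadForm] at hq
  have hq1 : ∀ (u : Fin 1 → Ix1 2 2) (c : Fin 1 → ℂ),
      (0:ℂ) ≤ ∑ k, ∑ l, (starRingEnd ℂ) (c k) * c l * S (u k) (u l) := by
    intro u c
    have hq := hS.dotProduct_mulVec_nonneg (quadVec u c)
    rwa [quadForm] at hq
  have hIdiag : ∀ q1 q2 : Fin 2, (0:ℂ) ≤ al S (q1,q2) (q1,q2) + be S (q1,q2) (q1,q2) := by
    intro q1 q2
    have hq := hq1 ![(q1,0,q2,0)] ![1]
    simp only [Fin.sum_univ_one, Matrix.cons_val_zero, Matrix.cons_val_fin_one] at hq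
    simp only [hsl] at hq
    norm_num at hq
    convert hq using 2
  have hIanti : ∀ q1 q2 : Fin 2,
      (0:ℂ) ≤ 2 * (al S (q1,q2) (q1,q2) - be S (q1,q2) (q1,q2)) := by
    intro q1 q2
    have hq := hq2 ![(q1,0,q2,1), (q1,1,q2,0)] ![1,-1]
    simp only [Fin.sum_univ_two, Matrix.cons_val_zero, Matrix.cons_val_one, Matrix.head_cons] at hq
    simp only [hsl] at hq
    norm_num at hq
    exact le_of_le_of_eq hq (by ring)
  have hI3 : (0:ℂ) ≤ 2 * ((al S (0,1) (0,1) - be S (0,1) (0,1))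
      + (al S (0,1) (1,0) - be S (0,1) (1,0)) + (al S (1,0) (0,1) - be S (1,0) (0,1))
      + (al S (1,0) (1,0) - be S (1,0) (1,0))) := by
    have hq := hq4 ![(0,0,1,1),(0,1,1,0),(1,0,0,1),(1,1,0,0)] ![1,-1,1,-1]
    simp only [Fin.sum_univ_four, Matrix.cons_val_zero, Matrix.cons_val_one, Matrix.head_cons,
      Matrix.cons_val_two, Matrix.tail_cons, Matrix.cons_val_three] at hq
    simp only [hsl] at hq
    norm_num at hq
    exact le_of_le_of_eq hq (by ring)
  have hI4 : (0:ℂ) ≤ (al S (0,1) (0,1) + be S (0,1) (0,1))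
      - (al S (0,1) (1,0) + be S (0,1) (1,0)) - (al S (1,0) (0,1) + be S (1,0) (0,1))
      + (al S (1,0) (1,0) + be S (1,0) (1,0)) := by
    have hq := hq2 ![(0,0,1,0), (1,0,0,0)] ![1,-1]
    simp only [Fin.sum_univ_two, Matrix.cons_val_zero, Matrix.cons_val_one, Matrix.head_cons] at hq
    simp only [hsl] at hq
    norm_num at hq
    exact le_of_le_of_eq hq (by ring)
  -- clean success relations
  have e1 : al S (0,0) (0,0) + be S (0,0) (0,0) + al S (0,1) (0,1) = (p:ℂ) := by
    have h := hE 0 0 0 0; norm_num at h; linear_combination h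
  have e2 : al S (1,0) (1,0) + be S (1,0) (1,0) + al S (1,1) (1,1) = 0 := by
    have h := hE 1 1 0 0; norm_num at h; linear_combination h
  have e3 : al S (0,0) (0,0) + al S (0,1) (0,1) + be S (0,1) (0,1) = 0 := by
    have h := hE 0 0 1 1; norm_num at h; linear_combination h
  have e4 : al S (1,0) (1,0) + al S (1,1) (1,1) + be S (1,1) (1,1) = (p:ℂ) := by
    have h := hE 1 1 1 1; norm_num at h; linear_combination h
  have e5 : be S (0,1) (1,0) = (p:ℂ) := by
    have h := hE 0 1 0 1; norm_num at h; linear_combination h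
  have e6 : be S (1,0) (0,1) = (p:ℂ) := by
    have h := hE 1 0 1 0; norm_num at h; linear_combination h
  -- the big positive combination, vanishing
  have hT : (0:ℂ) ≤ 2 * (2 * (al S (0,0) (0,0) - be S (0,0) (0,0)))
      + 2 * (2 * (al S (1,1) (1,1) - be S (1,1) (1,1)))
      + 2 * ((al S (0,1) (0,1) - be S (0,1) (0,1)) + (al S (0,1) (1,0) - be S (0,1) (1,0))
        + (al S (1,0) (0,1) - be S (1,0) (0,1)) + (al S (1,0) (1,0) - be S (1,0) (1,0)))
      + 2 * ((al S (0,1) (0,1) + be S (0,1) (0,1)) - (al S (0,1) (1,0) + be S (0,1) (1,0))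
        - (al S (1,0) (0,1) + be S (1,0) (0,1)) + (al S (1,0) (1,0) + be S (1,0) (1,0))) := by
    refine add_nonneg (add_nonneg (add_nonneg ?_ ?_) ?_) ?_
    · exact mul_nonneg (by norm_num) (hIanti 0 0)
    · exact mul_nonneg (by norm_num) (hIanti 1 1)
    · exact hI3
    · exact mul_nonneg (by norm_num) hI4
  have hrest0 : ∀ X Y : ℂ, X + Y = 0 → 0 ≤ X → 0 ≤ Y → X = 0 :=
    fun X Y h hX hY => eq_zero_of_nonneg_pair hX hY h
  have md1 : al S (0,0) (0,0) + be S (0,0) (0,0) = 0 := by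
    have grand : (8:ℂ) * (al S (0,0) (0,0) + be S (0,0) (0,0))
        + ((8:ℂ) * ((al S (0,1) (0,1) + be S (0,1) (0,1))
            + (al S (1,0) (1,0) + be S (1,0) (1,0)) + (al S (1,1) (1,1) + be S (1,1) (1,1)))
          + (2 * (2 * (al S (0,0) (0,0) - be S (0,0) (0,0)))
            + 2 * (2 * (al S (1,1) (1,1) - be S (1,1) (1,1)))
            + 2 * ((al S (0,1) (0,1) - be S (0,1) (0,1)) + (al S (0,1) (1,0) - be S (0,1) (1,0))
              + (al S (1,0) (0,1) - be S (1,0) (0,1)) + (al S (1,0) (1,0) - be S (1,0) (1,0)))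
            + 2 * ((al S (0,1) (0,1) + be S (0,1) (0,1)) - (al S (0,1) (1,0) + be S (0,1) (1,0))
              - (al S (1,0) (0,1) + be S (1,0) (0,1)) + (al S (1,0) (1,0) + be S (1,0) (1,0))))) = 0 := by
      linear_combination 4*e1 + 8*e2 + 8*e3 + 4*e4 - 4*e5 - 4*e6
    have h0 := hrest0 _ _ grand
      (mul_nonneg (by norm_num) (hIdiag 0 0))
      (add_nonneg (mul_nonneg (by norm_num)
        (add_nonneg (add_nonneg (hIdiag 0 1) (hIdiag 1 0)) (hIdiag 1 1))) hT)
    linear_combination (1/8 : ℂ) * h0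
  have md2 : al S (0,1) (0,1) + be S (0,1) (0,1) = 0 := by
    have grand : (8:ℂ) * (al S (0,1) (0,1) + be S (0,1) (0,1))
        + ((8:ℂ) * ((al S (0,0) (0,0) + be S (0,0) (0,0))
            + (al S (1,0) (1,0) + be S (1,0) (1,0)) + (al S (1,1) (1,1) + be S (1,1) (1,1)))
          + (2 * (2 * (al S (0,0) (0,0) - be S (0,0) (0,0)))
            + 2 * (2 * (al S (1,1) (1,1) - be S (1,1) (1,1)))
            + 2 * ((al S (0,1) (0,1) - be S (0,1) (0,1)) + (al S (0,1) (1,0) - be S (0,1) (1,0))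
              + (al S (1,0) (0,1) - be S (1,0) (0,1)) + (al S (1,0) (1,0) - be S (1,0) (1,0)))
            + 2 * ((al S (0,1) (0,1) + be S (0,1) (0,1)) - (al S (0,1) (1,0) + be S (0,1) (1,0))
              - (al S (1,0) (0,1) + be S (1,0) (0,1)) + (al S (1,0) (1,0) + be S (1,0) (1,0))))) = 0 := by
      linear_combination 4*e1 + 8*e2 + 8*e3 + 4*e4 - 4*e5 - 4*e6
    have h0 := hrest0 _ _ grand
      (mul_nonneg (by norm_num) (hIdiag 0 1))
      (add_nonneg (mul_nonneg (by norm_num)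
        (add_nonneg (add_nonneg (hIdiag 0 0) (hIdiag 1 0)) (hIdiag 1 1))) hT)
    linear_combination (1/8 : ℂ) * h0
  have md3 : al S (1,0) (1,0) + be S (1,0) (1,0) = 0 := by
    have grand : (8:ℂ) * (al S (1,0) (1,0) + be S (1,0) (1,0))
        + ((8:ℂ) * ((al S (0,0) (0,0) + be S (0,0) (0,0))
            + (al S (0,1) (0,1) + be S (0,1) (0,1)) + (al S (1,1) (1,1) + be S (1,1) (1,1)))
          + (2 * (2 * (al S (0,0) (0,0) - be S (0,0) (0,0)))
            + 2 * (2 * (al S (1,1) (1,1) - be S (1,1) (1,1)))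
            + 2 * ((al S (0,1) (0,1) - be S (0,1) (0,1)) + (al S (0,1) (1,0) - be S (0,1) (1,0))
              + (al S (1,0) (0,1) - be S (1,0) (0,1)) + (al S (1,0) (1,0) - be S (1,0) (1,0)))
            + 2 * ((al S (0,1) (0,1) + be S (0,1) (0,1)) - (al S (0,1) (1,0) + be S (0,1) (1,0))
              - (al S (1,0) (0,1) + be S (1,0) (0,1)) + (al S (1,0) (1,0) + be S (1,0) (1,0))))) = 0 := by
      linear_combination 4*e1 + 8*e2 + 8*e3 + 4*e4 - 4*e5 - 4*e6
    have h0 := hrest0 _ _ grand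
      (mul_nonneg (by norm_num) (hIdiag 1 0))
      (add_nonneg (mul_nonneg (by norm_num)
        (add_nonneg (add_nonneg (hIdiag 0 0) (hIdiag 0 1)) (hIdiag 1 1))) hT)
    linear_combination (1/8 : ℂ) * h0
  have md4 : al S (1,1) (1,1) + be S (1,1) (1,1) = 0 := by
    have grand : (8:ℂ) * (al S (1,1) (1,1) + be S (1,1) (1,1))
        + ((8:ℂ) * ((al S (0,0) (0,0) + be S (0,0) (0,0))
            + (al S (0,1) (0,1) + be S (0,1) (0,1)) + (al S (1,0) (1,0) + be S (1,0) (1,0)))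
          + (2 * (2 * (al S (0,0) (0,0) - be S (0,0) (0,0)))
            + 2 * (2 * (al S (1,1) (1,1) - be S (1,1) (1,1)))
            + 2 * ((al S (0,1) (0,1) - be S (0,1) (0,1)) + (al S (0,1) (1,0) - be S (0,1) (1,0))
              + (al S (1,0) (0,1) - be S (1,0) (0,1)) + (al S (1,0) (1,0) - be S (1,0) (1,0)))
            + 2 * ((al S (0,1) (0,1) + be S (0,1) (0,1)) - (al S (0,1) (1,0) + be S (0,1) (1,0))
              - (al S (1,0) (0,1) + be S (1,0) (0,1)) + (al S (1,0) (1,0) + be S (1,0) (1,0))))) = 0 := by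
      linear_combination 4*e1 + 8*e2 + 8*e3 + 4*e4 - 4*e5 - 4*e6
    have h0 := hrest0 _ _ grand
      (mul_nonneg (by norm_num) (hIdiag 1 1))
      (add_nonneg (mul_nonneg (by norm_num)
        (add_nonneg (add_nonneg (hIdiag 0 0) (hIdiag 0 1)) (hIdiag 1 0))) hT)
    linear_combination (1/8 : ℂ) * h0
  have hmd : ∀ q1 q2 : Fin 2, al S (q1,q2) (q1,q2) + be S (q1,q2) (q1,q2) = 0 := by
    intro q1 q2
    fin_cases q1 <;> fin_cases q2
    exacts [md1, md2, md3, md4]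
  -- all entries of M := al + be vanish
  have hoff : ∀ q1 q2 r1 r2 : Fin 2,
      al S (q1,q2) (r1,r2) + be S (q1,q2) (r1,r2) = 0 := by
    intro q1 q2 r1 r2
    have w1 : (0:ℂ) ≤ (al S (q1,q2) (r1,r2) + be S (q1,q2) (r1,r2))
        + (al S (r1,r2) (q1,q2) + be S (r1,r2) (q1,q2)) := by
      have hq := hq2 ![(q1,0,q2,0), (r1,0,r2,0)] ![1,1]
      simp only [Fin.sum_univ_two, Matrix.cons_val_zero, Matrix.cons_val_one, Matrix.head_cons] at hq
      simp only [hsl] at hq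
      norm_num at hq
      exact le_of_le_of_eq hq (by linear_combination hmd q1 q2 + hmd r1 r2)
    have w2 : (0:ℂ) ≤ -((al S (q1,q2) (r1,r2) + be S (q1,q2) (r1,r2))
        + (al S (r1,r2) (q1,q2) + be S (r1,r2) (q1,q2))) := by
      have hq := hq2 ![(q1,0,q2,0), (r1,0,r2,0)] ![1,-1]
      simp only [Fin.sum_univ_two, Matrix.cons_val_zero, Matrix.cons_val_one, Matrix.head_cons] at hq
      simp only [hsl] at hq
      norm_num at hq
      exact le_of_le_of_eq hq (by linear_combination hmd q1 q2 + hmd r1 r2)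
    have w3 : (0:ℂ) ≤ Complex.I * ((al S (q1,q2) (r1,r2) + be S (q1,q2) (r1,r2))
        - (al S (r1,r2) (q1,q2) + be S (r1,r2) (q1,q2))) := by
      have hq := hq2 ![(q1,0,q2,0), (r1,0,r2,0)] ![1, Complex.I]
      simp only [Fin.sum_univ_two, Matrix.cons_val_zero, Matrix.cons_val_one, Matrix.head_cons] at hq
      simp only [hsl] at hq
      norm_num [Complex.conj_I, map_neg] at hq
      exact le_of_le_of_eq hq (by linear_combination hmd q1 q2 + hmd r1 r2)
    have w4 : (0:ℂ) ≤ -(Complex.I * ((al S (q1,q2) (r1,r2) + be S (q1,q2) (r1,r2))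
        - (al S (r1,r2) (q1,q2) + be S (r1,r2) (q1,q2)))) := by
      have hq := hq2 ![(q1,0,q2,0), (r1,0,r2,0)] ![1, -Complex.I]
      simp only [Fin.sum_univ_two, Matrix.cons_val_zero, Matrix.cons_val_one, Matrix.head_cons] at hq
      simp only [hsl] at hq
      norm_num [Complex.conj_I, map_neg] at hq
      exact le_of_le_of_eq hq (by linear_combination hmd q1 q2 + hmd r1 r2)
    have hz1 := le_antisymm (neg_nonneg.mp w2) w1
    have hz2' := le_antisymm (neg_nonneg.mp w4) w3
    have hz2 := mul_left_cancel₀ Complex.I_ne_zero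
      (show Complex.I * ((al S (q1,q2) (r1,r2) + be S (q1,q2) (r1,r2))
        - (al S (r1,r2) (q1,q2) + be S (r1,r2) (q1,q2))) = Complex.I * 0 by
          rw [mul_zero]; exact hz2')
    linear_combination (hz1 + hz2) / 2
  have alEq : ∀ q1 q2 r1 r2 : Fin 2,
      al S (q1,q2) (r1,r2) = (p:ℂ) * JYe (q1,q2) (r1,r2) := by
    intro q1 q2 r1 r2
    have h1 := hE q1 r1 0 0
    have h2 := hE q1 r1 1 1
    have h3 := hE q1 r1 0 1
    have h4 := hE q1 r1 1 0
    have m1 := hoff q1 0 r1 0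
    have m2 := hoff q1 0 r1 1
    have m3 := hoff q1 1 r1 0
    have m4 := hoff q1 1 r1 1
    fin_cases q1 <;> fin_cases q2 <;> fin_cases r1 <;> fin_cases r2 <;>
      norm_num [JYe, Prod.ext_iff] at h1 h2 h3 h4 m1 m2 m3 m4 ⊢ <;>
      first
        | linear_combination h2 - m4
        | linear_combination h1 - m1
        | linear_combination m3 - h3
        | linear_combination m2 - h4
  have beEq : ∀ q1 q2 r1 r2 : Fin 2,
      be S (q1,q2) (r1,r2) = -((p:ℂ) * JYe (q1,q2) (r1,r2)) := by
    intro q1 q2 r1 r2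
    linear_combination hoff q1 q2 r1 r2 - alEq q1 q2 r1 r2
  have hsplit : ∀ a o0 a' p0 : Fin 2, JYe (a,o0) (a',p0)
      = (if a = a' ∧ o0 = p0 then (1:ℂ) else 0) - (if a = p0 ∧ a' = o0 then 1 else 0) := by
    intro a o0 a' p0
    fin_cases a <;> fin_cases o0 <;> fin_cases a' <;> fin_cases p0 <;>
      simp [JYe, Prod.ext_iff]
  intro i0 j0 a a' b b' o0 p0
  rw [hsl i0 a b o0 j0 a' b' p0, alEq, beEq, JY_eq_JYe, hsplit i0 b j0 b', hsplit a o0 a' p0]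
  ring

end
end

section
/- Let N be a PSD matrix on I0⊗I1⊗O1⊗O0 (each factor ℂ²) such that N commutes with U_{I1} for every 2×2 unitary U (U acting as U on the factor I1 and as the identity elsewhere), and such that Tr_{I1 O1}[N (J_id^T ⊗ I_{I0 O0})] ≤ 2 · J_id^{I0 O0} in the Loewner order. Then there exists a PSD 2×2 matrix σ such that N = (J_id^{I0 O0}/2) ⊗ σ^{O1} ⊗ (I_{I1}/2), i.e., N is the product of the normalized maximally entangled operator on the pair (I0, O0), the matrix σ on O1, and the maximally mixed state on I1. -/
/-!
Statement 18: a PSD one-slot comb element `N` on `I0 ⊗ I1 ⊗ O1 ⊗ O0` (qubits)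
commuting with `U_{I1}` for all unitaries `U` and satisfying
`Tr_{I1 O1}[N (J_idᵀ ⊗ I)] ≤ 2 J_id` must factorize as
`N = (J_id^{I0 O0}/2) ⊗ σ^{O1} ⊗ (I_{I1}/2)` for some PSD `σ`.
-/

open Matrix Finset
open scoped ComplexOrder

noncomputable section

/-- `V` acting on the factor `I1` (and trivially elsewhere) of `I0 × I1 × O1 × O0`. -/
def onI1 (V : Matrix (Fin 2) (Fin 2) ℂ) : Matrix (Ix1 2 2) (Ix1 2 2) ℂ :=
  fun x y => (if x.1 = y.1 then 1 else 0) * V x.2.1 y.2.1 *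
    (if x.2.2.1 = y.2.2.1 then 1 else 0) * (if x.2.2.2 = y.2.2.2 then 1 else 0)

/- ### Auxiliary lemmas -/

lemma aux_fin2 (i : Fin 2) : i = 0 ∨ i = 1 := by omega

/-- A PSD matrix with a zero diagonal entry has the corresponding zero column. -/
lemma aux_col_zero {n : Type*} [Fintype n] [DecidableEq n] {A : Matrix n n ℂ}
    (hA : A.PosSemidef) {i : n} (h : A i i = 0) (x : n) : A x i = 0 := by
  have h1 : star (Pi.single i 1 : n → ℂ) ⬝ᵥ A *ᵥ (Pi.single i 1) = A i i := by
    simp [dotProduct, mulVec, Pi.single_apply]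
  have h2 := (hA.dotProduct_mulVec_zero_iff (Pi.single i 1)).mp (by rw [h1, h])
  have h3 := congrFun h2 x
  simpa [mulVec, dotProduct, Pi.single_apply] using h3

lemma aux_zentry : ∀ (k y : Ix1 2 2), onI1 !![1,0;0,-1] k y =
    if k = y then (if y.2.1 = (0:Fin 2) then 1 else -1) else 0 := by
  rintro ⟨k0,k1,k2,k3⟩ ⟨y0,y1,y2,y3⟩
  rcases aux_fin2 k1 with rfl | rfl <;> rcases aux_fin2 y1 with rfl | rfl <;>
    simp [onI1, Prod.ext_iff] <;>
    · split_ifs <;> simp_all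

lemma aux_xentry : ∀ (k y : Ix1 2 2), onI1 !![0,1;1,0] k y =
    if k = (y.1, y.2.1 + 1, y.2.2) then 1 else 0 := by
  rintro ⟨k0,k1,k2,k3⟩ ⟨y0,y1,y2,y3⟩
  rcases aux_fin2 k1 with rfl | rfl <;> rcases aux_fin2 y1 with rfl | rfl <;>
    simp [onI1, Prod.ext_iff] <;>
    · split_ifs <;> simp_all

lemma aux_zmem : (!![1,0;0,-1] : Matrix (Fin 2) (Fin 2) ℂ) ∈ Matrix.unitaryGroup (Fin 2) ℂ := by
  rw [Matrix.mem_unitaryGroup_iff]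
  ext i j
  fin_cases i <;> fin_cases j <;>
    simp [Matrix.mul_apply, Fin.sum_univ_two, Matrix.star_apply, Matrix.one_apply]

lemma aux_xmem : (!![0,1;1,0] : Matrix (Fin 2) (Fin 2) ℂ) ∈ Matrix.unitaryGroup (Fin 2) ℂ := by
  rw [Matrix.mem_unitaryGroup_iff]
  ext i j
  fin_cases i <;> fin_cases j <;>
    simp [Matrix.mul_apply, Fin.sum_univ_two, Matrix.star_apply, Matrix.one_apply]

/-- Off-diagonal (in the `I1` factor) entries vanish. -/
lemma aux_hz (N : Matrix (Ix1 2 2) (Ix1 2 2) ℂ)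
    (h : N * onI1 (!![1,0;0,-1]) = onI1 (!![1,0;0,-1]) * N) :
    ∀ (x y : Ix1 2 2), x.2.1 ≠ y.2.1 → N x y = 0 := by
  rintro ⟨x0,x1,x2⟩ ⟨y0,y1,y2⟩ hne
  have h1 := congrFun (congrFun h (x0,x1,x2)) (y0,y1,y2)
  rw [Matrix.mul_apply, Matrix.mul_apply] at h1
  simp only [aux_zentry, mul_ite, ite_mul, mul_one, mul_zero, one_mul, zero_mul,
    neg_mul, mul_neg, Finset.sum_ite_eq, Finset.sum_ite_eq', Finset.mem_univ,
    if_true] at h1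
  rcases aux_fin2 x1 with rfl | rfl <;> rcases aux_fin2 y1 with rfl | rfl
  · exact absurd rfl hne
  · rw [if_neg (by decide), if_pos rfl] at h1
    linear_combination -h1/2
  · rw [if_pos rfl, if_neg (by decide)] at h1
    linear_combination h1/2
  · exact absurd rfl hne

lemma aux_hf (N : Matrix (Ix1 2 2) (Ix1 2 2) ℂ)
    (h : N * onI1 (!![0,1;1,0]) = onI1 (!![0,1;1,0]) * N) :
    ∀ (x y : Ix1 2 2), N x (y.1, y.2.1 + 1, y.2.2) = N (x.1, x.2.1 + 1, x.2.2) y := by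
  intro x y
  have h1 := congrFun (congrFun h x) y
  rw [Matrix.mul_apply, Matrix.mul_apply] at h1
  have hx : ∀ k : Ix1 2 2, onI1 !![0,1;1,0] x k = if k = (x.1, x.2.1 + 1, x.2.2) then 1 else 0 := by
    rintro ⟨k0,k1,k2⟩
    rw [aux_xentry]
    obtain ⟨x0,x1,x2⟩ := x
    rcases aux_fin2 x1 with rfl | rfl <;> rcases aux_fin2 k1 with rfl | rfl <;>
      simp [Prod.ext_iff, eq_comm]
  simp only [aux_xentry, hx, mul_ite, ite_mul, mul_one, mul_zero, one_mul, zero_mul,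
    Finset.sum_ite_eq, Finset.sum_ite_eq', Finset.mem_univ, if_true] at h1
  exact h1


/-- Note `J_id = choi 1` and `J_idᵀ = J_id`. -/
theorem covariant_draw_factorizes
    (N : Matrix (Ix1 2 2) (Ix1 2 2) ℂ) (hN : N.PosSemidef)
    (hcomm : ∀ U ∈ Matrix.unitaryGroup (Fin 2) ℂ, N * onI1 U = onI1 U * N)
    (hDraw : ((2 : ℂ) • choi (1 : Matrix (Fin 2) (Fin 2) ℂ) -
      act1 N (choi (1 : Matrix (Fin 2) (Fin 2) ℂ))).PosSemidef) :
    ∃ σ : Matrix (Fin 2) (Fin 2) ℂ, σ.PosSemidef ∧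
      ∀ (i0 j0 a a' b b' o0 p0 : Fin 2),
        N (i0, a, b, o0) (j0, a', b', p0) =
          (choi (1 : Matrix (Fin 2) (Fin 2) ℂ) (i0, o0) (j0, p0) / 2) * σ b b' *
            (if a = a' then ((2 : ℂ))⁻¹ else 0) := by
  -- basic structural facts
  have hz := aux_hz N (hcomm _ aux_zmem)
  have hf := aux_hf N (hcomm _ aux_xmem)
  have hH : ∀ x y : Ix1 2 2, star (N y x) = N x y := by
    intro x y
    rw [← Matrix.conjTranspose_apply, hN.1]
  -- a-independence of the diagonal blocks
  have heq : ∀ (i0 b o0 j0 b' p0 : Fin 2),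
      N (i0,1,b,o0) (j0,1,b',p0) = N (i0,0,b,o0) (j0,0,b',p0) := by
    intro i0 b o0 j0 b' p0
    have h1 := hf (i0,0,b,o0) (j0,1,b',p0)
    norm_num at h1
    exact h1.symm
  -- diagonal entries are nonneg
  have hdiag : ∀ i : Ix1 2 2, 0 ≤ N i i := by
    intro i
    have := hN.dotProduct_mulVec_nonneg (Pi.single i 1)
    simpa [dotProduct, mulVec, Pi.single_apply] using this
  -- single-site quadratic form of the draw constraint
  have hq : ∀ j0 p0 : Fin 2, j0 ≠ p0 →
      N (j0,0,0,p0) (j0,0,0,p0) + N (j0,0,1,p0) (j0,0,1,p0) ≤ 0 := by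
    intro j0 p0 hne
    have h0 := hDraw.dotProduct_mulVec_nonneg (Pi.single (j0,p0) 1)
    have e : star (Pi.single (j0,p0) 1 : Fin 2 × Fin 2 → ℂ) ⬝ᵥ
        ((2:ℂ) • choi 1 - act1 N (choi 1)) *ᵥ (Pi.single (j0,p0) 1)
        = ((2:ℂ) • choi (1 : Matrix (Fin 2) (Fin 2) ℂ) - act1 N (choi 1)) (j0,p0) (j0,p0) := by
      simp [dotProduct, mulVec, Pi.single_apply]
    rw [e] at h0
    simp only [Matrix.sub_apply, Matrix.smul_apply, act1, choi, Matrix.one_apply,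
      Fin.sum_univ_two, Matrix.one_apply_ne (Ne.symm hne)] at h0
    norm_num at h0
    rw [hz (j0,1,1,p0) (j0,0,0,p0) (by decide : (1:Fin 2) ≠ 0),
      hz (j0,0,0,p0) (j0,1,1,p0) (by decide : (0:Fin 2) ≠ 1),
      heq j0 1 p0 j0 1 p0] at h0
    exact neg_nonneg.mp (h0.trans_eq (by ring))
  -- all columns with j0 ≠ p0 vanish
  have hcol : ∀ (x : Ix1 2 2) (j0 a' b' p0 : Fin 2), j0 ≠ p0 → N x (j0,a',b',p0) = 0 := by
    intro x j0 a' b' p0 hne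
    have h1 := hq j0 p0 hne
    have d0 : 0 ≤ N (j0,0,0,p0) (j0,0,0,p0) := hdiag _
    have d1 : 0 ≤ N (j0,0,1,p0) (j0,0,1,p0) := hdiag _
    have z0 : N (j0,0,0,p0) (j0,0,0,p0) = 0 :=
      le_antisymm ((le_add_of_nonneg_right d1).trans h1) d0
    have z1 : N (j0,0,1,p0) (j0,0,1,p0) = 0 :=
      le_antisymm ((le_add_of_nonneg_left d0).trans h1) d1
    have zdiag : N (j0,a',b',p0) (j0,a',b',p0) = 0 := by
      rcases aux_fin2 a' with rfl | rfl <;> rcases aux_fin2 b' with rfl | rfl <;>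
        simp [heq, z0, z1]
    exact aux_col_zero hN zdiag x
  -- all rows with i0 ≠ o0 vanish
  have hrow : ∀ (i0 a b o0 : Fin 2) (y : Ix1 2 2), i0 ≠ o0 → N (i0,a,b,o0) y = 0 := by
    intro i0 a b o0 y hne
    rw [← hH, hcol y i0 a b o0 hne, star_zero]
  -- kernel facts: column (0,0,d,0) equals column (1,0,d,1)
  have hker : ∀ (d : Fin 2) (x : Ix1 2 2), N x (1,0,d,1) = N x (0,0,d,0) := by
    set u : Fin 2 → Ix1 2 2 → ℂ :=
      fun d q => if q = (0,0,d,0) then 1 else if q = (1,0,d,1) then -1 else 0 with hu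
    have t0 := hN.dotProduct_mulVec_nonneg (u 0)
    have t1 := hN.dotProduct_mulVec_nonneg (u 1)
    have e0 : star (u 0) ⬝ᵥ N *ᵥ (u 0) =
        N (0,0,0,0) (0,0,0,0) - N (0,0,0,0) (1,0,0,1) - N (1,0,0,1) (0,0,0,0)
          + N (1,0,0,1) (1,0,0,1) := by
      simp [hu, dotProduct, mulVec, Fintype.sum_prod_type, Fin.sum_univ_two, Prod.ext_iff]
      ring
    have e1 : star (u 1) ⬝ᵥ N *ᵥ (u 1) =
        N (0,0,1,0) (0,0,1,0) - N (0,0,1,0) (1,0,1,1) - N (1,0,1,1) (0,0,1,0)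
          + N (1,0,1,1) (1,0,1,1) := by
      simp [hu, dotProduct, mulVec, Fintype.sum_prod_type, Fin.sum_univ_two, Prod.ext_iff]
      ring
    have h3 := hDraw.dotProduct_mulVec_nonneg (fun p : Fin 2 × Fin 2 =>
      if p = (0,0) then (1:ℂ) else if p = (1,1) then -1 else 0)
    simp only [dotProduct, mulVec, Fintype.sum_prod_type, Fin.sum_univ_two, act1, choi,
      Matrix.one_apply, Matrix.sub_apply, Matrix.smul_apply, Prod.ext_iff] at h3
    norm_num at h3
    rw [hz (0,0,0,0) (1,1,1,1) (by decide), hz (0,1,1,0) (1,0,0,1) (by decide),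
      hz (0,0,0,0) (0,1,1,0) (by decide), hz (0,1,1,0) (0,0,0,0) (by decide),
      hz (1,0,0,1) (0,1,1,0) (by decide), hz (1,1,1,1) (0,0,0,0) (by decide),
      hz (1,0,0,1) (1,1,1,1) (by decide), hz (1,1,1,1) (1,0,0,1) (by decide),
      heq 0 1 0 1 1 1, heq 0 1 0 0 1 0, heq 1 1 1 0 1 0, heq 1 1 1 1 1 1] at h3
    have hsum : star (u 0) ⬝ᵥ N *ᵥ (u 0) + star (u 1) ⬝ᵥ N *ᵥ (u 1) ≤ 0 := by
      rw [e0, e1]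
      exact neg_nonneg.mp (h3.trans_eq (by ring))
    have z0 : star (u 0) ⬝ᵥ N *ᵥ (u 0) = 0 :=
      le_antisymm ((le_add_of_nonneg_right t1).trans hsum) t0
    have z1 : star (u 1) ⬝ᵥ N *ᵥ (u 1) = 0 :=
      le_antisymm ((le_add_of_nonneg_left t0).trans hsum) t1
    intro d x
    rcases aux_fin2 d with rfl | rfl
    · have k := (hN.dotProduct_mulVec_zero_iff (u 0)).mp z0
      have k2 := congrFun k x
      simp only [hu, mulVec, dotProduct, Pi.zero_apply, mul_ite, mul_one, mul_neg, mul_zero,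
        Fintype.sum_prod_type, Fin.sum_univ_two, Prod.ext_iff,
        show (0:Ix1 2 2) = (0,0,0,0) from rfl] at k2
      norm_num at k2
      linear_combination -k2
    · have k := (hN.dotProduct_mulVec_zero_iff (u 1)).mp z1
      have k2 := congrFun k x
      simp only [hu, mulVec, dotProduct, Pi.zero_apply, mul_ite, mul_one, mul_neg, mul_zero,
        Fintype.sum_prod_type, Fin.sum_univ_two, Prod.ext_iff,
        show (0:Ix1 2 2) = (0,0,0,0) from rfl] at k2
      norm_num at k2
      linear_combination -k2
  -- row version of the kernel fact
  have hkerr : ∀ (d : Fin 2) (y : Ix1 2 2), N (1,0,d,1) y = N (0,0,d,0) y := by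
    intro d y
    rw [← hH (1,0,d,1) y, hker d y, hH]
  -- the claimed σ
  refine ⟨fun b b' => 4 * N (0,0,b,0) (0,0,b',0), PosSemidef.of_dotProduct_mulVec_nonneg ?_ ?_, ?_⟩
  · -- Hermitian
    ext b b'
    show star (4 * N (0,0,b',0) (0,0,b,0)) = 4 * N (0,0,b,0) (0,0,b',0)
    simp only [star_mul']
    rw [hH (0,0,b,0) (0,0,b',0)]
    norm_num
  · -- quadratic form nonneg
    intro x
    set y : Ix1 2 2 → ℂ :=
      fun q => if q.1 = 0 ∧ q.2.1 = 0 ∧ q.2.2.2 = 0 then x q.2.2.1 else 0 with hy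
    have e : star x ⬝ᵥ (fun b b' => 4 * N (0,0,b,0) (0,0,b',0)) *ᵥ x
        = 4 * (star y ⬝ᵥ N *ᵥ y) := by
      simp only [hy, dotProduct, mulVec, Fintype.sum_prod_type, Fin.sum_univ_two]
      norm_num
      ring
    rw [e]
    exact mul_nonneg (by norm_num) (hN.dotProduct_mulVec_nonneg y)
  · -- entrywise factorization
    intro i0 j0 a a' b b' o0 p0
    rcases eq_or_ne a a' with rfl | hne
    · have L1 : N (i0,a,b,o0) (j0,a,b',p0) = N (i0,0,b,o0) (j0,0,b',p0) := by
        rcases aux_fin2 a with rfl | rfl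
        · rfl
        · exact heq i0 b o0 j0 b' p0
      rcases eq_or_ne j0 p0 with rfl | hj
      · rcases eq_or_ne i0 o0 with rfl | hi
        · have L2 : N (i0,0,b,i0) (j0,0,b',j0) = N (0,0,b,0) (0,0,b',0) := by
            rcases aux_fin2 i0 with rfl | rfl <;> rcases aux_fin2 j0 with rfl | rfl <;>
              simp [hker, hkerr]
          rw [L1, L2]
          simp [choi, Matrix.one_apply]
          ring
        · rw [L1, hrow i0 0 b o0 _ hi]
          simp [choi, Matrix.one_apply, Ne.symm hi]
      · rw [L1, hcol _ j0 0 b' p0 hj]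
        simp [choi, Matrix.one_apply, Ne.symm hj]
    · rw [hz (i0,a,b,o0) (j0,a',b',p0) hne, if_neg hne, mul_zero]


end
end
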